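/- Let n be a positive integer and p an odd prime. A connected circulant graph Cay(Z_n, S) of degree p (i.e., |S| = p) admits a total perfect code if and only if p divides n and s ≢ s′ (mod p) for all distinct s, s′ ∈ S. -/

import Mathlib

open Polynomial

/-- The circulant graph `Cay(Z_n, S)`: vertices are `ZMod n`, and `u, v` are adjacent
iff `v - u ∈ S` (here symmetrised; when `S = -S` this agrees with the usual definition). -/
def circulantGraph (n : ℕ) (S : Finset (ZMod n)) : SimpleGraph (ZMod n) :=
  SimpleGraph.fromRel (fun u v => v - u ∈ S)

/-- `C` is a perfect code in `G`: an independent set such that every vertex outside `C`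
is adjacent to exactly one vertex of `C`. -/
def IsPerfectCode {V : Type*} (G : SimpleGraph V) (C : Set V) : Prop :=
  (∀ u ∈ C, ∀ v ∈ C, ¬ G.Adj u v) ∧ ∀ v, v ∉ C → ∃! c, c ∈ C ∧ G.Adj v c

/-- `C` is a total perfect code in `G`: every vertex is adjacent to exactly one vertex of `C`. -/
def IsTotalPerfectCode {V : Type*} (G : SimpleGraph V) (C : Set V) : Prop :=
  ∀ v, ∃! c, c ∈ C ∧ G.Adj v c

section Aux
open Finset

/-- number of elements of `T` whose value is `≡ x mod q` -/
def cntf (n : ℕ) (T : Finset (ZMod n)) (q : ℕ) (x : ℕ) : ℕ :=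
  (T.filter (fun t => t.val % q = x % q)).card

lemma cntf_congr {n : ℕ} (T : Finset (ZMod n)) {q x y : ℕ} (h : x % q = y % q) :
    cntf n T q x = cntf n T q y := by
  unfold cntf; rw [h]

lemma card_filter_range_mod {N d r : ℕ} (hd : 0 < d) (hdN : d ∣ N) (hr : r < d) :
    ((Finset.range N).filter (fun y => y % d = r)).card = N / d := by
  rw [← Finset.card_range (N / d)]
  apply Finset.card_bij' (fun y _ => y / d) (fun i _ => r + i * d)
  · intro y hy
    simp only [mem_filter, mem_range] at hy
    rw [Finset.mem_range]
    exact Nat.div_lt_div_of_lt_of_dvd hdN hy.1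
  · intro i hi
    rw [Finset.mem_range] at hi
    simp only [mem_filter, mem_range]
    constructor
    · calc r + i * d < d + i * d := by omega
        _ = (i + 1) * d := by ring
        _ ≤ (N / d) * d := by
            exact Nat.mul_le_mul_right d hi
        _ = N := Nat.div_mul_cancel hdN
    · simp [Nat.add_mul_mod_self_right, Nat.mod_eq_of_lt hr]
  · intro y hy
    simp only [mem_filter, mem_range] at hy
    rw [← hy.2]
    exact Nat.mod_add_div' y d
  · intro i hi
    rw [Nat.add_mul_div_right _ _ hd, Nat.div_eq_of_lt hr, zero_add]

lemma sum_cntf {n : ℕ} (T : Finset (ZMod n)) {q : ℕ} (hq : 0 < q) :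
    ∑ x ∈ Finset.range q, cntf n T q x = T.card := by
  rw [Finset.card_eq_sum_card_fiberwise (f := fun t : ZMod n => t.val % q) (t := range q)
    (fun t _ => Finset.mem_range.mpr (Nat.mod_lt _ hq))]
  apply Finset.sum_congr rfl
  intro x hx
  rw [Finset.mem_range] at hx
  unfold cntf
  congr 1
  apply Finset.filter_congr
  intro t _
  simp [Nat.mod_eq_of_lt hx]

lemma cntf_step {n : ℕ} (T : Finset (ZMod n)) {d q : ℕ} (hd : 0 < d) (hdq : d ∣ q) (hq : 0 < q)
    (hper : ∀ x y, x % d = y % d → cntf n T q x = cntf n T q y) (x : ℕ) :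
    cntf n T d x = (q / d) * cntf n T q x := by
  have hmap : ∀ t ∈ T.filter (fun t : ZMod n => t.val % d = x % d),
      t.val % q ∈ (range q).filter (fun y => y % d = x % d) := by
    intro t ht
    simp only [mem_filter, mem_range] at ht ⊢
    exact ⟨Nat.mod_lt _ hq, by rw [Nat.mod_mod_of_dvd _ hdq]; exact ht.2⟩
  have h1 : cntf n T d x = ∑ y ∈ (range q).filter (fun y => y % d = x % d),
      ((T.filter (fun t : ZMod n => t.val % d = x % d)).filter
        (fun t => t.val % q = y)).card :=
    Finset.card_eq_sum_card_fiberwise hmap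
  rw [h1]
  have h2 : ∀ y ∈ (range q).filter (fun y => y % d = x % d),
      ((T.filter (fun t : ZMod n => t.val % d = x % d)).filter
        (fun t => t.val % q = y)).card = cntf n T q x := by
    intro y hy
    simp only [mem_filter, mem_range] at hy
    have : ((T.filter (fun t : ZMod n => t.val % d = x % d)).filter
        (fun t => t.val % q = y)) = T.filter (fun t : ZMod n => t.val % q = y % q) := by
      ext t
      simp only [mem_filter]
      constructor
      · rintro ⟨⟨ht, _⟩, h2⟩
        exact ⟨ht, by rw [h2, Nat.mod_eq_of_lt hy.1]⟩
      · rintro ⟨ht, h2⟩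
        rw [Nat.mod_eq_of_lt hy.1] at h2
        refine ⟨⟨ht, ?_⟩, h2⟩
        rw [← Nat.mod_mod_of_dvd _ hdq, h2, hy.2]
    rw [this]
    exact hper y x hy.2
  rw [Finset.sum_congr rfl h2, Finset.sum_const, card_filter_range_mod hd hdq (Nat.mod_lt _ hd),
    smul_eq_mul]

lemma pow_mod_eq {K : Type*} [Monoid K] {ζ : K} {q : ℕ} (hζ : ζ ^ q = 1) (m : ℕ) :
    ζ ^ (m % q) = ζ ^ m := by
  conv_rhs => rw [← Nat.div_add_mod m q]
  rw [pow_add, pow_mul, hζ, one_pow, one_mul]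

/-- splitting a sum over `range (a*b)` -/
lemma sum_range_mul {M : Type*} [AddCommMonoid M] (f : ℕ → M) (a b : ℕ) (hb : 0 < b) :
    ∑ x ∈ Finset.range (a * b), f x = ∑ i ∈ Finset.range a, ∑ r ∈ Finset.range b, f (i * b + r) := by
  rw [← Finset.sum_product']
  apply Finset.sum_nbij' (fun x => (x / b, x % b)) (fun ir => ir.1 * b + ir.2)
  · intro x hx
    rw [Finset.mem_range] at hx
    simp only [Finset.mem_product, Finset.mem_range]
    exact ⟨Nat.div_lt_of_lt_mul (by rwa [mul_comm] at hx), Nat.mod_lt _ hb⟩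
  · intro ir hir
    simp only [Finset.mem_product, Finset.mem_range] at hir
    rw [Finset.mem_range]
    calc ir.1 * b + ir.2 < ir.1 * b + b := by omega
      _ = (ir.1 + 1) * b := by ring
      _ ≤ a * b := Nat.mul_le_mul_right b hir.1
  · intro x _; exact Nat.div_add_mod' x b
  · intro ir hir
    simp only [Finset.mem_product, Finset.mem_range] at hir
    have h1 : (ir.1 * b + ir.2) / b = ir.1 := by
      rw [add_comm, Nat.add_mul_div_right _ _ hb, Nat.div_eq_of_lt hir.2, zero_add]
    have h2 : (ir.1 * b + ir.2) % b = ir.2 := by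
      rw [add_comm, Nat.add_mul_mod_self_right, Nat.mod_eq_of_lt hir.2]
    rw [Prod.ext_iff]
    exact ⟨h1, h2⟩
  · intro x _
    rw [Nat.div_add_mod' x b]

lemma vanish {K : Type*} [Field K] [CharZero K] {p k : ℕ} (hp : p.Prime) (hk : 0 < k)
    {ζ : K} (hζ : IsPrimitiveRoot ζ (p ^ k)) (f : ℕ → ℚ)
    (h : ∑ x ∈ Finset.range (p ^ k), f x • ζ ^ x = 0) :
    ∀ x y, x < p ^ k → y < p ^ k → x % p ^ (k - 1) = y % p ^ (k - 1) → f x = f y := by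
  obtain ⟨k', rfl⟩ : ∃ k', k = k' + 1 := ⟨k - 1, by omega⟩
  obtain ⟨p', rfl⟩ : ∃ p', p = p' + 1 := ⟨p - 1, by have := hp.pos; omega⟩
  simp only [Nat.add_sub_cancel]
  set p := p' + 1 with hpdef
  set d := p ^ k' with hd
  have hdpos : 0 < d := pow_pos hp.pos _
  have hqd : p ^ (k' + 1) = p * d := by rw [pow_succ, mul_comm]
  set ω := ζ ^ d with hω
  have hωprim : IsPrimitiveRoot ω p := hζ.pow (pow_pos hp.pos _) (by rw [hqd, mul_comm])
  have hωsum : ∑ i ∈ Finset.range p, ω ^ i = 0 := by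
    rw [geom_sum_eq (hωprim.ne_one hp.one_lt), hωprim.pow_eq_one, sub_self, zero_div]
  set A : ℕ → K := fun i => ∑ r ∈ Finset.range d, f (i * d + r) • ζ ^ r with hA
  have h2 : ∑ i ∈ Finset.range p, A i * ω ^ i = 0 := by
    rw [← h, hqd, sum_range_mul _ p d hdpos]
    apply Finset.sum_congr rfl
    intro i _
    rw [hA]
    rw [Finset.sum_mul]
    apply Finset.sum_congr rfl
    intro r _
    rw [smul_mul_assoc]
    congr 1
    rw [hω, ← pow_mul, ← pow_add]
    congr 1
    ring
  have e1 := h2; rw [Finset.sum_range_succ] at e1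
  have e2 := hωsum; rw [Finset.sum_range_succ] at e2
  have e3 : ω ^ p' = - ∑ i ∈ Finset.range p', ω ^ i := eq_neg_of_add_eq_zero_right e2
  have h3 : ∑ i ∈ Finset.range p', (A i - A p') * ω ^ i = 0 := by
    calc ∑ i ∈ Finset.range p', (A i - A p') * ω ^ i
        = (∑ i ∈ Finset.range p', A i * ω ^ i) - A p' * ∑ i ∈ Finset.range p', ω ^ i := by
          rw [Finset.mul_sum, ← Finset.sum_sub_distrib]
          exact Finset.sum_congr rfl fun i _ => by ring
      _ = (∑ i ∈ Finset.range p', A i * ω ^ i) + A p' * ω ^ p' := by rw [e3]; ring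
      _ = 0 := e1
  set g : ℕ → ℚ := fun x => f x - f (p' * d + x % d) with hg
  have h4 : ∑ x ∈ Finset.range (p' * d), g x • ζ ^ x = 0 := by
    rw [sum_range_mul _ p' d hdpos, ← h3]
    apply Finset.sum_congr rfl
    intro i _
    simp only [hA]
    rw [← Finset.sum_sub_distrib, Finset.sum_mul]
    apply Finset.sum_congr rfl
    intro r hr
    rw [Finset.mem_range] at hr
    have hmod : (i * d + r) % d = r := by
      rw [add_comm, Nat.add_mul_mod_self_right, Nat.mod_eq_of_lt hr]
    have hpow : ζ ^ r * ω ^ i = ζ ^ (i * d + r) := by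
      rw [hω, ← pow_mul, ← pow_add]; congr 1; ring
    simp only [hg, hmod]
    rw [sub_smul, sub_mul, smul_mul_assoc, smul_mul_assoc, hpow]
  have hdeg : (minpoly ℚ ζ).natDegree = p' * d := by
    rw [← Polynomial.cyclotomic_eq_minpoly_rat hζ (pow_pos hp.pos _),
      Polynomial.natDegree_cyclotomic, Nat.totient_prime_pow hp (Nat.succ_pos k')]
    simp only [hd, hpdef, Nat.succ_sub_one, Nat.add_sub_cancel]
    ring
  have hli := Fintype.linearIndependent_iff.mp (linearIndependent_pow (K := ℚ) ζ)
  have hz : ∀ i : Fin (minpoly ℚ ζ).natDegree, g i = 0 := by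
    apply hli (fun i : Fin _ => g i)
    rw [Fin.sum_univ_eq_sum_range (fun j => g j • ζ ^ j) ((minpoly ℚ ζ).natDegree), hdeg]
    exact h4
  have key : ∀ x, x < p' * d → g x = 0 := fun x hx => hz ⟨x, by rw [hdeg]; exact hx⟩
  have hrange : ∀ z, z < p ^ (k' + 1) → f z = f (p' * d + z % d) := by
    intro z hz1
    rcases lt_or_ge z (p' * d) with hlt | hge
    · have := key z hlt
      rw [hg] at this
      exact sub_eq_zero.mp this
    · have h1 : z / d = p' := by
        apply Nat.le_antisymm
        · have : z < d * p := by rw [mul_comm, ← hqd]; exact hz1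
          exact Nat.lt_succ_iff.mp (Nat.div_lt_of_lt_mul this)
        · exact (Nat.le_div_iff_mul_le hdpos).mpr hge
      have : z = p' * d + z % d := by
        calc z = d * (z / d) + z % d := (Nat.div_add_mod z d).symm
          _ = p' * d + z % d := by rw [h1, mul_comm]
      rw [← this]
  intro x y hx hy hxy
  rw [hrange x hx, hrange y hy, hxy]


/-- the sum of `ζ ^ t.val` over a finset, grouped by residues of the value -/
lemma charsum {n : ℕ} {K : Type*} [Field K] (T : Finset (ZMod n)) {q : ℕ} (hq : 0 < q)
    {ζ : K} (hζq : ζ ^ q = 1) :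
    ∑ t ∈ T, ζ ^ t.val = ∑ x ∈ Finset.range q, cntf n T q x • ζ ^ x := by
  rw [← Finset.sum_fiberwise_of_maps_to (g := fun t : ZMod n => t.val % q) (t := Finset.range q)
      (fun t _ => Finset.mem_range.mpr (Nat.mod_lt _ hq)) (fun t => ζ ^ t.val)]
  apply Finset.sum_congr rfl
  intro x hx
  rw [Finset.mem_range] at hx
  have h1 : ∀ t ∈ T.filter (fun t : ZMod n => t.val % q = x), ζ ^ t.val = ζ ^ x := by
    intro t ht
    rw [Finset.mem_filter] at ht
    rw [← pow_mod_eq hζq t.val, ht.2]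
  rw [Finset.sum_congr rfl h1, Finset.sum_const]
  congr 1
  unfold cntf
  congr 1
  apply Finset.filter_congr
  intro t _
  simp [Nat.mod_eq_of_lt hx]

end Aux

theorem circulant_totalPerfectCode_iff_of_degree_prime
    (n : ℕ) (hn : 0 < n) (p : ℕ) (hp : p.Prime) (hodd : Odd p)
    (S : Finset (ZMod n)) (h0S : (0 : ZMod n) ∉ S) (hSneg : ∀ s ∈ S, -s ∈ S)
    (hcard : S.card = p) (hconn : (circulantGraph n S).Connected) :
    (∃ C : Set (ZMod n), IsTotalPerfectCode (circulantGraph n S) C) ↔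
      (p ∣ n ∧ ∀ s ∈ S, ∀ s' ∈ S, s ≠ s' → ¬ (s.val ≡ s'.val [MOD p])) := by
  haveI : NeZero n := ⟨hn.ne'⟩
  have hadj : ∀ u v : ZMod n, (circulantGraph n S).Adj u v ↔ v - u ∈ S := by
    intro u v
    rw [circulantGraph, SimpleGraph.fromRel_adj]
    constructor
    · rintro ⟨hne, h | h⟩
      · exact h
      · have := hSneg _ h; rwa [neg_sub] at this
    · intro h
      refine ⟨?_, Or.inl h⟩
      rintro rfl
      rw [sub_self] at h
      exact h0S h
  have hSne : S.Nonempty := by rw [← Finset.card_pos, hcard]; exact hp.pos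
  have hn1 : 1 < n := by
    obtain ⟨s, hs⟩ := hSne
    have hsne : s ≠ 0 := fun h => h0S (h ▸ hs)
    by_contra hle
    have : n = 1 := by omega
    subst this
    exact hsne (Subsingleton.elim s 0)
  haveI : Fact (1 < n) := ⟨hn1⟩
  constructor
  · rintro ⟨C, hC⟩
    set C' : Finset (ZMod n) := (Set.toFinite C).toFinset with hC'
    have hmemC' : ∀ x, x ∈ C' ↔ x ∈ C := fun x => Set.Finite.mem_toFinset _
    have hkey : ∀ v : ZMod n, ∃! sc : ZMod n × ZMod n,
        (sc.1 ∈ S ∧ sc.2 ∈ C') ∧ sc.2 - sc.1 = v := by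
      intro v
      obtain ⟨c, ⟨hcC, hcadj⟩, huniq⟩ := hC v
      rw [hadj] at hcadj
      refine ⟨(c - v, c), ⟨⟨hcadj, (hmemC' c).mpr hcC⟩, by ring⟩, ?_⟩
      rintro ⟨s', c'⟩ ⟨⟨hs', hc'⟩, hv⟩
      simp only at hv
      have hcc : c' = c := by
        apply huniq c'
        refine ⟨(hmemC' c').mp hc', (hadj v c').mpr ?_⟩
        have : c' - v = s' := by rw [← hv]; ring
        rw [this]; exact hs'
      have hss : s' = c - v := by rw [← hcc, ← hv]; ring
      exact Prod.ext hss hcc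
    have hcardn : n = p * C'.card := by
      have hbij : (S ×ˢ C').card = Fintype.card (ZMod n) := by
        rw [← Finset.card_univ]
        apply Finset.card_bij (fun sc _ => sc.2 - sc.1)
        · intros; exact Finset.mem_univ _
        · intro a ha b hb hab
          rw [Finset.mem_product] at ha hb
          obtain ⟨_, _, hu⟩ := hkey (a.2 - a.1)
          have h1 := hu a ⟨⟨ha.1, ha.2⟩, rfl⟩
          have h2 := hu b ⟨⟨hb.1, hb.2⟩, hab.symm⟩
          rw [h1, h2]
        · intro v _
          obtain ⟨sc, ⟨hmem, hv⟩, _⟩ := hkey v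
          exact ⟨sc, Finset.mem_product.mpr hmem, hv⟩
      rw [Finset.card_product, hcard, ZMod.card] at hbij
      exact hbij.symm
    have hpn : p ∣ n := ⟨C'.card, hcardn⟩
    set m := n.factorization p with hm
    have hm1 : 1 ≤ m := hp.factorization_pos_of_dvd hn.ne' hpn
    -- connectivity: S cannot lie in the subgroup of multiples of p
    have hconncontra : (∀ s ∈ S, p ∣ s.val) → False := by
      intro hall
      have hstep : ∀ u v : ZMod n, (circulantGraph n S).Adj u v → p ∣ u.val → p ∣ v.val := by
        intro u v huv hu
        rw [hadj] at huv
        have h1 : p ∣ (v - u).val := hall _ huv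
        have h2 : v = u + (v - u) := by ring
        rw [h2, ZMod.val_add]
        exact (Nat.dvd_mod_iff hpn).mpr (Nat.dvd_add hu h1)
      have hreach : ∀ u v : ZMod n, (circulantGraph n S).Walk u v → p ∣ u.val → p ∣ v.val := by
        intro u v w
        induction w with
        | nil => exact id
        | cons h w ih => exact fun hu => ih (hstep _ _ h hu)
      obtain ⟨w⟩ := hconn.preconnected 0 1
      have h0 : p ∣ (0 : ZMod n).val := by simp
      have h1 := hreach 0 1 w h0
      rw [ZMod.val_one] at h1
      exact hp.one_lt.ne' (Nat.dvd_one.mp h1)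
    -- the dichotomy coming from characters
    have hdich : ∀ k, 1 ≤ k → k ≤ m →
        (∀ x y, x % p ^ (k-1) = y % p ^ (k-1) → cntf n S (p^k) x = cntf n S (p^k) y) ∨
        (∀ x y, x % p ^ (k-1) = y % p ^ (k-1) → cntf n C' (p^k) x = cntf n C' (p^k) y) := by
      intro k hk1 hkm
      have hq : 0 < p ^ k := pow_pos hp.pos k
      have hqn : p ^ k ∣ n := (hp.pow_dvd_iff_le_factorization hn.ne').mpr hkm
      have hq1 : 1 < p ^ k := Nat.one_lt_pow (by omega) hp.one_lt
      set q : ℕ+ := ⟨p ^ k, hq⟩ with hqdef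
      set K := CyclotomicField q ℚ with hK
      haveI : IsCyclotomicExtension {(q : ℕ)} ℚ K := by
        haveI : NeZero ((q : ℕ) : ℚ) := ⟨by exact_mod_cast q.ne_zero⟩
        exact CyclotomicField.isCyclotomicExtension (q : ℕ) ℚ
      set ζ : K := IsCyclotomicExtension.zeta q ℚ K with hζdef
      have hζ : IsPrimitiveRoot ζ (p ^ k) := IsCyclotomicExtension.zeta_spec q ℚ K
      have hζq : ζ ^ (p ^ k) = 1 := hζ.pow_eq_one
      have hζn : ζ ^ n = 1 := by
        obtain ⟨c, hc⟩ := hqn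
        rw [hc, pow_mul, hζq, one_pow]
      have hvaladd : ∀ a b : ZMod n, ζ ^ (a + b).val = ζ ^ a.val * ζ ^ b.val := by
        intro a b
        rw [ZMod.val_add, pow_mod_eq hζn, pow_add]
      have hzsum : ∑ v : ZMod n, ζ ^ v.val = 0 := by
        have h1 : ∑ v : ZMod n, ζ ^ v.val = ∑ j ∈ Finset.range n, ζ ^ j := by
          apply Finset.sum_nbij' (fun v : ZMod n => v.val) (fun j => (j : ZMod n))
          · intro a _; exact Finset.mem_range.mpr (ZMod.val_lt a)
          · intro a _; exact Finset.mem_univ _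
          · intro a _; simp [ZMod.natCast_val, ZMod.cast_id]
          · intro j hj; exact ZMod.val_cast_of_lt (Finset.mem_range.mp hj)
          · intro a _; rfl
        rw [h1, geom_sum_eq (hζ.ne_one hq1), hζn, sub_self, zero_div]
      have hneg : ∑ s ∈ S, ζ ^ (-s).val = ∑ s ∈ S, ζ ^ s.val := by
        apply Finset.sum_nbij' (fun s => -s) (fun s => -s)
        · intro a ha; exact hSneg a ha
        · intro a ha; exact hSneg a ha
        · intro a _; exact neg_neg a
        · intro a _; exact neg_neg a
        · intro a _; rfl
      have hprod : (∑ s ∈ S, ζ ^ s.val) * (∑ c ∈ C', ζ ^ c.val) = 0 := by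
        have h1 : ∑ sc ∈ S ×ˢ C', ζ ^ (sc.2 - sc.1).val = ∑ v : ZMod n, ζ ^ v.val := by
          apply Finset.sum_bij (fun sc _ => sc.2 - sc.1)
          · intros; exact Finset.mem_univ _
          · intro a ha b hb hab
            rw [Finset.mem_product] at ha hb
            obtain ⟨_, _, hu⟩ := hkey (a.2 - a.1)
            have e1 := hu a ⟨⟨ha.1, ha.2⟩, rfl⟩
            have e2 := hu b ⟨⟨hb.1, hb.2⟩, hab.symm⟩
            rw [e1, e2]
          · intro v _
            obtain ⟨sc, ⟨hmem, hv⟩, _⟩ := hkey v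
            exact ⟨sc, Finset.mem_product.mpr hmem, hv⟩
          · intro a _; rfl
        have h2 : ∑ sc ∈ S ×ˢ C', ζ ^ (sc.2 - sc.1).val
            = (∑ s ∈ S, ζ ^ s.val) * (∑ c ∈ C', ζ ^ c.val) := by
          rw [Finset.sum_product]
          calc ∑ s ∈ S, ∑ c ∈ C', ζ ^ (c - s).val
              = ∑ s ∈ S, ∑ c ∈ C', ζ ^ (-s).val * ζ ^ c.val := by
                apply Finset.sum_congr rfl; intro s _
                apply Finset.sum_congr rfl; intro c _
                rw [show c - s = -s + c by ring, hvaladd]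
            _ = (∑ s ∈ S, ζ ^ (-s).val) * (∑ c ∈ C', ζ ^ c.val) := by
                rw [Finset.sum_mul]
                apply Finset.sum_congr rfl; intro s _
                rw [Finset.mul_sum]
            _ = _ := by rw [hneg]
        rw [← h2, h1, hzsum]
      have hper : ∀ T : Finset (ZMod n), (∑ t ∈ T, ζ ^ t.val) = 0 →
          ∀ x y, x % p ^ (k-1) = y % p ^ (k-1) → cntf n T (p^k) x = cntf n T (p^k) y := by
        intro T hT x y hxy
        have hsum0 : ∑ z ∈ Finset.range (p^k), ((cntf n T (p^k) z : ℚ)) • ζ ^ z = 0 := by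
          have h3 := charsum (K := K) T hq hζq
          rw [hT] at h3
          calc ∑ z ∈ Finset.range (p^k), ((cntf n T (p^k) z : ℚ)) • ζ ^ z
              = ∑ z ∈ Finset.range (p^k), cntf n T (p^k) z • ζ ^ z := by
                apply Finset.sum_congr rfl; intro z _
                exact Nat.cast_smul_eq_nsmul ℚ _ _
            _ = 0 := h3.symm
        have hv := vanish hp (by omega) hζ _ hsum0
        have hdd : p ^ (k-1) ∣ p ^ k := pow_dvd_pow p (by omega)
        have e1 : ((cntf n T (p^k) (x % p^k) : ℚ)) = cntf n T (p^k) (y % p^k) := by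
          apply hv _ _ (Nat.mod_lt _ hq) (Nat.mod_lt _ hq)
          rw [Nat.mod_mod_of_dvd _ hdd, Nat.mod_mod_of_dvd _ hdd, hxy]
        have e2 : cntf n T (p^k) (x % p^k) = cntf n T (p^k) (y % p^k) := Nat.cast_inj.mp e1
        calc cntf n T (p^k) x = cntf n T (p^k) (x % p^k) :=
              cntf_congr T (Nat.mod_mod_of_dvd x (dvd_refl (p^k))).symm
          _ = cntf n T (p^k) (y % p^k) := e2
          _ = cntf n T (p^k) y := cntf_congr T (Nat.mod_mod_of_dvd y (dvd_refl (p^k)))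
      rcases mul_eq_zero.mp hprod with h0 | h0
      · exact Or.inl (hper S h0)
      · exact Or.inr (hper C' h0)
    -- analysis of the S side for k ≥ 2 : contradiction
    have hSanalysis : ∀ k, 2 ≤ k → k ≤ m →
        (∀ x y, x % p ^ (k-1) = y % p ^ (k-1) → cntf n S (p^k) x = cntf n S (p^k) y) →
        False := by
      intro k hk2 hkm hperS
      have hd : (0:ℕ) < p ^ (k-1) := pow_pos hp.pos _
      have hq : (0:ℕ) < p ^ k := pow_pos hp.pos _
      have hdq : p ^ (k-1) ∣ p ^ k := pow_dvd_pow p (by omega)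
      have hstep := cntf_step S hd hdq hq hperS
      have hqd : p ^ k / p ^ (k-1) = p := by
        have e : k - (k-1) = 1 := by omega
        rw [Nat.pow_div (by omega) hp.pos, e, pow_one]
      rw [hqd] at hstep
      apply hconncontra
      intro s hsS
      have h1 : 1 ≤ cntf n S (p^k) s.val :=
        Finset.card_pos.mpr ⟨s, Finset.mem_filter.mpr ⟨hsS, rfl⟩⟩
      have h2 : cntf n S (p^(k-1)) s.val = p * cntf n S (p^k) s.val := hstep s.val
      have h3 : cntf n S (p^(k-1)) s.val ≤ p := by
        rw [← hcard]; exact Finset.card_filter_le _ _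
      have h4 : cntf n S (p^k) s.val = 1 := by
        have h5 : p * cntf n S (p^k) s.val ≤ p * 1 := by rw [mul_one, ← h2]; exact h3
        have h6 := Nat.le_of_mul_le_mul_left h5 hp.pos
        omega
      have h7 : S.filter (fun t : ZMod n => t.val % p^(k-1) = s.val % p^(k-1)) = S := by
        apply Finset.eq_of_subset_of_card_le (Finset.filter_subset _ _)
        have h7a : cntf n S (p^(k-1)) s.val = p := by rw [h2, h4, mul_one]
        have h7b : S.card =
            (S.filter (fun t : ZMod n => t.val % p^(k-1) = s.val % p^(k-1))).card := by
          rw [hcard]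
          exact h7a.symm
        exact le_of_eq h7b
      have h6 : (-s).val % p^(k-1) = s.val % p^(k-1) := by
        have hmem : -s ∈ S := hSneg s hsS
        rw [← h7] at hmem
        exact (Finset.mem_filter.mp hmem).2
      have hs0 : s ≠ 0 := fun h => h0S (h ▸ hsS)
      have hvn : s.val < n := ZMod.val_lt s
      have hnegval : (-s).val = n - s.val := by rw [ZMod.neg_val]; simp [hs0]
      have hqn : p ^ k ∣ n := (hp.pow_dvd_iff_le_factorization hn.ne').mpr hkm
      have hdn : p^(k-1) ∣ n := dvd_trans hdq hqn
      have hmodn : (n - s.val) % p^(k-1) = s.val % p^(k-1) := by rw [← hnegval]; exact h6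
      have hmod2 : p^(k-1) ∣ 2 * s.val := by
        have h7' : (n - s.val) ≡ s.val [MOD p^(k-1)] := hmodn
        have h8 : (n - s.val) + s.val = n := by omega
        have h9 : (n - s.val) + s.val ≡ s.val + s.val [MOD p^(k-1)] := Nat.ModEq.add_right _ h7'
        rw [h8] at h9
        have h10 : s.val + s.val ≡ 0 [MOD p^(k-1)] :=
          h9.symm.trans (Nat.modEq_zero_iff_dvd.mpr hdn)
        have := Nat.modEq_zero_iff_dvd.mp h10
        rwa [two_mul]
      have hcop : Nat.Coprime (p^(k-1)) 2 :=
        Nat.Coprime.pow_left _ (Nat.coprime_two_right.mpr hodd)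
      have hdvd2 : p^(k-1) ∣ s.val := hcop.dvd_of_dvd_mul_left hmod2
      exact dvd_trans (dvd_pow_self p (by omega : k - 1 ≠ 0)) hdvd2
    -- analysis of the S side for k = 1 : the conclusion
    have hS1 : (∀ x y, x % p ^ 0 = y % p ^ 0 → cntf n S (p^1) x = cntf n S (p^1) y) →
        ∀ s ∈ S, ∀ s' ∈ S, s ≠ s' → ¬ (s.val ≡ s'.val [MOD p]) := by
      intro hper s hsS s' hs'S hne hmod
      have hallx : ∀ y, cntf n S (p^1) y = cntf n S (p^1) 0 := fun y => hper y 0 (by simp [Nat.mod_one])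
      have hsum := sum_cntf S (q := p^1) (pow_pos hp.pos 1)
      rw [Finset.sum_congr rfl (fun y _ => hallx y), Finset.sum_const, Finset.card_range,
        smul_eq_mul] at hsum
      have hone : cntf n S (p^1) 0 = 1 := by
        apply Nat.eq_of_mul_eq_mul_left (pow_pos hp.pos 1)
        rw [mul_one, hsum, hcard]
        exact (pow_one p).symm
      have h2 : 2 ≤ cntf n S (p^1) s.val := by
        apply Finset.one_lt_card.mpr
        refine ⟨s, Finset.mem_filter.mpr ⟨hsS, rfl⟩, s', Finset.mem_filter.mpr ⟨hs'S, ?_⟩, ?_⟩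
        · rw [pow_one]
          exact hmod.symm
        · exact hne
      rw [hallx s.val, hone] at h2
      omega
    -- analysis of the C side : contradiction
    have hCside : (∀ k, 1 ≤ k → k ≤ m → ∀ x y, x % p^(k-1) = y % p^(k-1) →
        cntf n C' (p^k) x = cntf n C' (p^k) y) → False := by
      intro hper
      have hconst : ∀ t, t < m → ∀ x y, x % p^(m-1-t) = y % p^(m-1-t) →
          cntf n C' (p^m) x = cntf n C' (p^m) y := by
        intro t
        induction t with
        | zero => exact fun _ x y hxy => hper m hm1 le_rfl x y (by simpa using hxy)
        | succ t ih =>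
          intro ht x y hxy
          have htm : t < m := by omega
          have hih := ih htm
          have hd : (0:ℕ) < p^(m-1-t) := pow_pos hp.pos _
          have hq : (0:ℕ) < p^m := pow_pos hp.pos _
          have hdq : p^(m-1-t) ∣ p^m := pow_dvd_pow _ (by omega)
          have hstep := cntf_step C' hd hdq hq hih
          have hmid := hper (m-1-t) (by omega) (by omega)
          have e : m-1-t-1 = m-1-(t+1) := by omega
          have h1 : cntf n C' (p^(m-1-t)) x = cntf n C' (p^(m-1-t)) y :=
            hmid x y (by rw [e]; exact hxy)
          rw [hstep x, hstep y] at h1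
          exact Nat.eq_of_mul_eq_mul_left (Nat.div_pos (Nat.le_of_dvd hq hdq) hd) h1
      have hconst0 : ∀ x, cntf n C' (p^m) x = cntf n C' (p^m) 0 := by
        intro x
        apply hconst (m-1) (by omega) x 0
        have e : m-1-(m-1) = 0 := by omega
        rw [e]
        simp [Nat.mod_one]
      have hsum := sum_cntf C' (q := p^m) (pow_pos hp.pos m)
      rw [Finset.sum_congr rfl (fun y _ => hconst0 y), Finset.sum_const, Finset.card_range,
        smul_eq_mul] at hsum
      have hdvd : p^m ∣ C'.card := ⟨_, hsum.symm⟩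
      have hdn : p^(m+1) ∣ n := by
        obtain ⟨c, hc⟩ := hdvd
        exact ⟨c, by rw [hcardn, hc, pow_succ]; ring⟩
      have := (hp.pow_dvd_iff_le_factorization hn.ne').mp hdn
      omega
    refine ⟨hpn, ?_⟩
    rcases hdich 1 le_rfl hm1 with h1 | h1
    · exact hS1 (by simpa using h1)
    · exfalso
      apply hCside
      intro k hk1 hkm
      rcases Nat.lt_or_ge k 2 with hk | hk
      · have : k = 1 := by omega
        subst this
        exact h1
      · rcases hdich k hk1 hkm with h2 | h2
        · exact (hSanalysis k hk hkm h2).elim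
        · exact h2
  · rintro ⟨hpn, hdist⟩
    haveI : NeZero p := ⟨hp.ne_zero⟩
    have hinj : Set.InjOn (fun s : ZMod n => ((s.val : ℕ) : ZMod p)) S := by
      intro a ha b hb hab
      by_contra hne
      exact hdist a ha b hb hne ((ZMod.natCast_eq_natCast_iff _ _ _).mp hab)
    have himg : (S.image (fun s : ZMod n => ((s.val : ℕ) : ZMod p))) = Finset.univ := by
      apply Finset.eq_univ_of_card
      rw [Finset.card_image_of_injOn hinj, hcard, ZMod.card]
    have hex : ∀ a : ZMod p, ∃ s ∈ S, ((s.val : ℕ) : ZMod p) = a := by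
      intro a
      have : a ∈ S.image (fun s : ZMod n => ((s.val : ℕ) : ZMod p)) :=
        himg ▸ Finset.mem_univ a
      simpa using this
    have hdvdval : ∀ v s : ZMod n,
        (p ∣ (v + s).val ↔ ((s.val : ℕ) : ZMod p) = - ((v.val : ℕ) : ZMod p)) := by
      intro v s
      rw [ZMod.val_add, Nat.dvd_mod_iff hpn, ← ZMod.natCast_eq_zero_iff,
        Nat.cast_add, add_comm, add_eq_zero_iff_eq_neg]
    refine ⟨{x : ZMod n | p ∣ x.val}, ?_⟩
    intro v
    obtain ⟨s, hsS, hs⟩ := hex (-((v.val : ℕ) : ZMod p))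
    refine ⟨v + s, ⟨?_, ?_⟩, ?_⟩
    · exact (hdvdval v s).mpr hs
    · rw [hadj]
      have : (v + s) - v = s := by ring
      rw [this]; exact hsS
    · rintro c ⟨hcC, hcadj⟩
      rw [hadj] at hcadj
      have hcv : v + (c - v) = c := by ring
      have h2 : (((c - v).val : ℕ) : ZMod p) = -((v.val : ℕ) : ZMod p) := by
        apply (hdvdval v (c - v)).mp
        rw [hcv]
        exact hcC
      have h3 : c - v = s := hinj hcadj hsS (by
        show (((c - v).val : ℕ) : ZMod p) = ((s.val : ℕ) : ZMod p)
        rw [h2, hs])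
      rw [← h3, hcv]
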